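/- Let δ, κ > 0, μ ≥ 0, let β be the unique solution in (0, ∞) of tanh(√(2δ)·β) = δ(2κβ − δ)/(κ√(2δ)), set A = −κ/(δ² cosh(√(2δ)β)), and define u : ℝ → ℝ by u(x) = A cosh(√(2δ)x) + (κ/δ)x² + (κ + δμ)/δ² for |x| ≤ β and u(x) = |x| − β + u(β) for |x| > β. Then u is twice continuously differentiable on ℝ, |u'(x)| ≤ 1 for all x ∈ ℝ, (1/2)u''(x) − δu(x) + κx² + μ = 0 for all |x| ≤ β, (1/2)u''(x) − δu(x) + κx² + μ ≥ 0 for all |x| ≥ β, and hence min{(1/2)u''(x) − δu(x) + κx² + μ, 1 − |u'(x)|} = 0 for all x ∈ ℝ. -/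

import Mathlib

open Real Set Filter

set_option maxHeartbeats 2000000 in
/-- With `β` the unique positive root of the free-boundary equation,
`A = −κ/(δ² cosh(√(2δ)β))` and `u` defined piecewise (the smooth-fit candidate),
`u` is `C²`, `|u'| ≤ 1` everywhere, the ODE `(1/2)u'' − δu + κx² + μ = 0` holds for
`|x| ≤ β`, the inequality `(1/2)u'' − δu + κx² + μ ≥ 0` holds for `|x| ≥ β`, and hence
`min{(1/2)u'' − δu + κx² + μ, 1 − |u'|} = 0` everywhere. -/
theorem statement3 (δ κ μ β A : ℝ) (hδ : 0 < δ) (hκ : 0 < κ) (hμ : 0 ≤ μ) (hβ : 0 < β)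
    (heq : Real.tanh (Real.sqrt (2*δ) * β) = δ * (2*κ*β - δ) / (κ * Real.sqrt (2*δ)))
    (hA : A = -κ / (δ^2 * Real.cosh (Real.sqrt (2*δ) * β)))
    (u : ℝ → ℝ)
    (hu : ∀ x : ℝ, u x =
      if |x| ≤ β then A * Real.cosh (Real.sqrt (2*δ) * x) + (κ/δ) * x^2 + (κ + δ*μ)/δ^2
      else |x| - β + (A * Real.cosh (Real.sqrt (2*δ) * β) + (κ/δ) * β^2 + (κ + δ*μ)/δ^2)) :
    ContDiff ℝ 2 u ∧
    (∀ x : ℝ, |deriv u x| ≤ 1) ∧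
    (∀ x : ℝ, |x| ≤ β → (1/2) * deriv (deriv u) x - δ * u x + κ * x^2 + μ = 0) ∧
    (∀ x : ℝ, β ≤ |x| → 0 ≤ (1/2) * deriv (deriv u) x - δ * u x + κ * x^2 + μ) ∧
    (∀ x : ℝ, min ((1/2) * deriv (deriv u) x - δ * u x + κ * x^2 + μ) (1 - |deriv u x|) = 0) := by
  have hδ' : δ ≠ 0 := hδ.ne'
  have hκ' : κ ≠ 0 := hκ.ne'
  set c : ℝ := Real.sqrt (2*δ) with hcdef
  have hc0 : 0 < c := Real.sqrt_pos.mpr (by linarith)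
  have hc' : c ≠ 0 := hc0.ne'
  have hc2 : c^2 = 2*δ := Real.sq_sqrt (by linarith)
  set f : ℝ → ℝ := fun x => A * Real.cosh (c*x) + (κ/δ) * x^2 + (κ + δ*μ)/δ^2 with hfdef
  set f1 : ℝ → ℝ := fun x => A * c * Real.sinh (c*x) + 2*(κ/δ)*x with hf1def
  set f2 : ℝ → ℝ := fun x => A * c^2 * Real.cosh (c*x) + 2*(κ/δ) with hf2def
  have hu' : ∀ x : ℝ, u x = if |x| ≤ β then f x else |x| - β + f β := hu
  -- derivatives of the smooth pieces
  have hDcosh : ∀ x : ℝ, HasDerivAt (fun y => Real.cosh (c*y)) (c * Real.sinh (c*x)) x := by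
    intro x
    have h := (Real.hasDerivAt_cosh (c*x)).comp x ((hasDerivAt_id x).const_mul c)
    simpa [Function.comp_def, mul_comm] using h
  have hDsinh : ∀ x : ℝ, HasDerivAt (fun y => Real.sinh (c*y)) (c * Real.cosh (c*x)) x := by
    intro x
    have h := (Real.hasDerivAt_sinh (c*x)).comp x ((hasDerivAt_id x).const_mul c)
    simpa [Function.comp_def, mul_comm] using h
  have hDf : ∀ x : ℝ, HasDerivAt f (f1 x) x := by
    intro x
    simp only [hfdef, hf1def]
    have h1 := (((hDcosh x).const_mul A).add
      ((hasDerivAt_pow 2 x).const_mul (κ/δ))).add_const ((κ + δ*μ)/δ^2)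
    refine h1.congr_deriv ?_
    push_cast; ring
  have hDf1 : ∀ x : ℝ, HasDerivAt f1 (f2 x) x := by
    intro x
    simp only [hf1def, hf2def]
    have h1 := ((hDsinh x).const_mul (A*c)).add ((hasDerivAt_id x).const_mul (2*(κ/δ)))
    refine h1.congr_deriv ?_
    push_cast; ring
  -- basic facts about A, β
  have hcoshβ : 0 < Real.cosh (c*β) := Real.cosh_pos _
  have hAcosh : A * Real.cosh (c*β) = -κ/δ^2 := by
    rw [hA]; field_simp
  have hA0 : A < 0 := by
    rw [hA]
    apply div_neg_of_neg_of_pos (by linarith)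
    positivity
  have htanh0 : 0 < Real.tanh (c*β) := by
    rw [Real.tanh_eq_sinh_div_cosh]
    exact div_pos (Real.sinh_pos_iff.mpr (by positivity)) hcoshβ
  have h2κβ : δ < 2*κ*β := by
    by_contra h
    push_neg at h
    rw [heq] at htanh0
    have : δ * (2*κ*β - δ) / (κ * c) ≤ 0 := by
      apply div_nonpos_of_nonpos_of_nonneg
      · nlinarith
      · positivity
    linarith
  have hsinhβ : Real.sinh (c*β) = (δ*(2*κ*β - δ)/(κ*c)) * Real.cosh (c*β) := by
    rw [← heq, Real.tanh_eq_sinh_div_cosh]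
    field_simp
  have hf1β : f1 β = 1 := by
    simp only [hf1def, hA, hsinhβ]
    field_simp
    ring
  have hf1negβ : f1 (-β) = -1 := by
    simp only [hf1def, mul_neg, Real.sinh_neg]
    have : A * c * Real.sinh (c*β) + 2*(κ/δ)*β = 1 := hf1β
    linarith [this]
  have hf2β : f2 β = 0 := by
    have h := hAcosh
    field_simp at h
    simp only [hf2def, hc2]
    field_simp
    linear_combination 2*h
  have hfeven : f (-β) = f β := by
    simp only [hfdef, mul_neg, Real.cosh_neg, neg_sq]
  have hfβ : f β = (κ*β^2 + μ)/δ := by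
    simp only [hfdef]
    rw [show A * Real.cosh (c*β) = -κ/δ^2 from hAcosh]
    field_simp
    ring
  -- f2 ≥ 0 on |x| ≤ β
  have hf2nonneg : ∀ x : ℝ, |x| ≤ β → 0 ≤ f2 x := by
    intro x hx
    have hcc : Real.cosh (c*x) ≤ Real.cosh (c*β) := by
      rw [Real.cosh_le_cosh, abs_mul, abs_mul, abs_of_pos hc0, abs_of_pos hβ]
      exact mul_le_mul_of_nonneg_left hx hc0.le
    have hAc2 : A * c^2 < 0 := by nlinarith
    have := mul_le_mul_of_nonpos_left hcc hAc2.le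
    have h0 : f2 β = 0 := hf2β
    simp only [hf2def] at h0 ⊢
    nlinarith
  -- monotonicity of f1 on [-β, β]
  have hmono : MonotoneOn f1 (Icc (-β) β) := by
    apply monotoneOn_of_deriv_nonneg (convex_Icc _ _)
    · exact fun x _ => (hDf1 x).differentiableAt.continuousAt.continuousWithinAt
    · intro x hx
      exact (hDf1 x).differentiableAt.differentiableWithinAt
    · intro x hx
      rw [interior_Icc] at hx
      rw [(hDf1 x).deriv]
      exact hf2nonneg x (abs_le.mpr ⟨hx.1.le, hx.2.le⟩)
  have hf1bound : ∀ x : ℝ, |x| ≤ β → |f1 x| ≤ 1 := by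
    intro x hx
    rw [abs_le] at hx ⊢
    constructor
    · rw [← hf1negβ]
      exact hmono (by simp [mem_Icc]; linarith) (mem_Icc.mpr ⟨hx.1, hx.2⟩) hx.1
    · rw [← hf1β]
      exact hmono (mem_Icc.mpr ⟨hx.1, hx.2⟩) (by simp [mem_Icc]; linarith) hx.2
  -- the global derivative candidate
  set g : ℝ → ℝ := fun x => if |x| ≤ β then f1 x else max (-1) (min 1 (x/β)) with hgdef
  set g2 : ℝ → ℝ := fun x => if |x| ≤ β then f2 x else 0 with hg2def
  have hgpos : ∀ x : ℝ, β < x → g x = 1 := by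
    intro x hx
    have h1 : ¬ |x| ≤ β := by rw [abs_of_pos (by linarith)]; linarith
    have h2 : (1:ℝ) < x/β := (one_lt_div hβ).mpr hx
    simp only [hgdef, if_neg h1]
    rw [min_eq_left h2.le, max_eq_right (by norm_num : (-1:ℝ) ≤ 1)]
  have hgneg : ∀ x : ℝ, x < -β → g x = -1 := by
    intro x hx
    have h1 : ¬ |x| ≤ β := by rw [abs_of_neg (by linarith)]; linarith
    have h2 : x/β < -1 := by rw [div_lt_iff₀ hβ]; linarith
    simp only [hgdef, if_neg h1]
    rw [min_eq_right (by linarith), max_eq_left (by linarith)]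
  have hgβ : g β = 1 := by
    simp only [hgdef, if_pos (le_of_eq (abs_of_pos hβ))]
    exact hf1β
  have hgnegβ : g (-β) = -1 := by
    have h1 : |(-β)| ≤ β := by rw [abs_neg, abs_of_pos hβ]
    simp only [hgdef, if_pos h1]
    exact hf1negβ
  have hgin : ∀ x : ℝ, |x| ≤ β → g x = f1 x := by
    intro x hx; simp only [hgdef, if_pos hx]
  -- open-set eventual equalities
  have hopen_in : IsOpen {y : ℝ | |y| < β} := isOpen_lt continuous_abs continuous_const
  have hu_eq_f_in : ∀ x : ℝ, |x| < β → u =ᶠ[nhds x] f := by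
    intro x hx
    filter_upwards [hopen_in.mem_nhds hx] with y hy
    rw [hu' y, if_pos (le_of_lt hy)]
  have hg_eq_f1_in : ∀ x : ℝ, |x| < β → g =ᶠ[nhds x] f1 := by
    intro x hx
    filter_upwards [hopen_in.mem_nhds hx] with y hy
    exact hgin y (le_of_lt hy)
  -- derivative of u
  have hDu : ∀ x : ℝ, HasDerivAt u (g x) x := by
    intro x
    rcases lt_trichotomy (|x|) β with h | h | h
    · rw [hgin x h.le]
      exact (hDf x).congr_of_eventuallyEq (hu_eq_f_in x h)
    · -- |x| = β, so x = β or x = -β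
      rcases (abs_eq (le_of_lt hβ)).mp h with h' | h'
      · -- x = β
        rw [h']
        rw [hgβ]
        have hIic : HasDerivWithinAt u 1 (Iic β) β := by
          have h1 : HasDerivWithinAt f 1 (Iic β) β := by
            have := (hDf β).hasDerivWithinAt (s := Iic β)
            rwa [hf1β] at this
          apply h1.congr_of_eventuallyEq ?_ (by rw [hu' β, if_pos (le_of_eq (abs_of_pos hβ))])
          have : ∀ᶠ y in nhds β, -β < y := eventually_gt_nhds (by linarith)
          filter_upwards [nhdsWithin_le_nhds this, self_mem_nhdsWithin] with y hy1 hy2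
          rw [hu' y, if_pos (abs_le.mpr ⟨hy1.le, hy2⟩)]
        have hIci : HasDerivWithinAt u 1 (Ici β) β := by
          have h1 : HasDerivWithinAt (fun y => y - β + f β) 1 (Ici β) β :=
            (((hasDerivAt_id β).sub_const β).add_const (f β)).hasDerivWithinAt
          apply h1.congr_of_eventuallyEq ?_ (by rw [hu' β, if_pos (le_of_eq (abs_of_pos hβ))]; simp)
          filter_upwards [self_mem_nhdsWithin] with y (hy : β ≤ y)
          rcases eq_or_lt_of_le hy with h'' | hy'
          · subst h''
            rw [hu' β, if_pos (le_of_eq (abs_of_pos hβ))]; simp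
          · rw [hu' y, if_neg (by rw [abs_of_pos (by linarith)]; linarith),
              abs_of_pos (by linarith)]
        have := hIic.union hIci
        rwa [Iic_union_Ici, hasDerivWithinAt_univ] at this
      · -- x = -β
        rw [h', hgnegβ]
        have hIci : HasDerivWithinAt u (-1) (Ici (-β)) (-β) := by
          have h1 : HasDerivWithinAt f (-1) (Ici (-β)) (-β) := by
            have := (hDf (-β)).hasDerivWithinAt (s := Ici (-β))
            rwa [hf1negβ] at this
          apply h1.congr_of_eventuallyEq ?_
            (by rw [hu' (-β), if_pos (by rw [abs_neg, abs_of_pos hβ])])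
          have : ∀ᶠ y in nhds (-β), y < β := eventually_lt_nhds (by linarith)
          filter_upwards [nhdsWithin_le_nhds this, self_mem_nhdsWithin] with y hy1 (hy2 : -β ≤ y)
          rw [hu' y, if_pos (abs_le.mpr ⟨hy2, hy1.le⟩)]
        have hIic : HasDerivWithinAt u (-1) (Iic (-β)) (-β) := by
          have h1 : HasDerivWithinAt (fun y => -y - β + f β) (-1) (Iic (-β)) (-β) := by
            have : HasDerivAt (fun y : ℝ => -y - β + f β) (-1) (-β) :=
              (((hasDerivAt_id (-β)).neg).sub_const β).add_const (f β)
            exact this.hasDerivWithinAt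
          apply h1.congr_of_eventuallyEq ?_
            (by rw [hu' (-β), if_pos (by rw [abs_neg, abs_of_pos hβ])]; simp [hfeven])
          filter_upwards [self_mem_nhdsWithin] with y (hy : y ≤ -β)
          rcases eq_or_lt_of_le hy with h'' | hy'
          · subst h''
            rw [hu' (-β), if_pos (by rw [abs_neg, abs_of_pos hβ])]; simp [hfeven]
          · rw [hu' y, if_neg (by rw [abs_of_neg (by linarith)]; linarith),
              abs_of_neg (by linarith)]
        have := hIic.union hIci
        rwa [Iic_union_Ici, hasDerivWithinAt_univ] at this
    · -- |x| > β
      rcases lt_abs.mp h with hx | hx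
      · -- β < x
        have hev : u =ᶠ[nhds x] fun y => y - β + f β := by
          filter_upwards [eventually_gt_nhds hx] with y hy
          rw [hu' y, if_neg (by rw [abs_of_pos (by linarith)]; linarith),
            abs_of_pos (by linarith)]
        rw [hgpos x hx]
        exact (((hasDerivAt_id x).sub_const β).add_const (f β)).congr_of_eventuallyEq hev
      · -- x < -β
        have hx' : x < -β := by linarith
        have hev : u =ᶠ[nhds x] fun y => -y - β + f β := by
          filter_upwards [eventually_lt_nhds hx'] with y hy
          rw [hu' y, if_neg (by rw [abs_of_neg (by linarith)]; linarith),
            abs_of_neg (by linarith)]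
        rw [hgneg x hx']
        exact (((hasDerivAt_id x).neg.sub_const β).add_const (f β)).congr_of_eventuallyEq hev
  have hderiv_u : deriv u = g := funext fun x => (hDu x).deriv
  -- second derivative
  have hDg : ∀ x : ℝ, HasDerivAt g (g2 x) x := by
    intro x
    rcases lt_trichotomy (|x|) β with h | h | h
    · have hg2x : g2 x = f2 x := by simp only [hg2def, if_pos h.le]
      rw [hg2x]
      exact (hDf1 x).congr_of_eventuallyEq (hg_eq_f1_in x h)
    · rcases (abs_eq hβ.le).mp h with h' | h'
      · rw [h']
        have hg2β : g2 β = 0 := by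
          simp only [hg2def, if_pos (le_of_eq (abs_of_pos hβ)), hf2β]
        rw [hg2β]
        have hIic : HasDerivWithinAt g 0 (Iic β) β := by
          have h1 := (hDf1 β).hasDerivWithinAt (s := Iic β)
          rw [hf2β] at h1
          apply h1.congr_of_eventuallyEq ?_ (hgin β (le_of_eq (abs_of_pos hβ)))
          have hev : ∀ᶠ y in nhds β, -β < y := eventually_gt_nhds (by linarith)
          filter_upwards [nhdsWithin_le_nhds hev, self_mem_nhdsWithin] with y hy1 hy2
          exact hgin y (abs_le.mpr ⟨hy1.le, hy2⟩)
        have hIci : HasDerivWithinAt g 0 (Ici β) β := by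
          have h1 : HasDerivWithinAt (fun _ : ℝ => (1:ℝ)) 0 (Ici β) β :=
            (hasDerivAt_const β (1:ℝ)).hasDerivWithinAt
          apply h1.congr_of_eventuallyEq ?_ hgβ
          filter_upwards [self_mem_nhdsWithin] with y (hy : β ≤ y)
          rcases eq_or_lt_of_le hy with h'' | hy'
          · subst h''; exact hgβ
          · exact hgpos y hy'
        have := hIic.union hIci
        rwa [Iic_union_Ici, hasDerivWithinAt_univ] at this
      · rw [h']
        have hf2even : f2 (-β) = f2 β := by
          simp only [hf2def, mul_neg, Real.cosh_neg]
        have hg2negβ : g2 (-β) = 0 := by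
          have habs : |(-β)| ≤ β := by rw [abs_neg, abs_of_pos hβ]
          simp only [hg2def, if_pos habs, hf2even, hf2β]
        rw [hg2negβ]
        have hIci : HasDerivWithinAt g 0 (Ici (-β)) (-β) := by
          have h1 := (hDf1 (-β)).hasDerivWithinAt (s := Ici (-β))
          rw [hf2even, hf2β] at h1
          apply h1.congr_of_eventuallyEq ?_ (hgin (-β) (by rw [abs_neg, abs_of_pos hβ]))
          have hev : ∀ᶠ y in nhds (-β), y < β := eventually_lt_nhds (by linarith)
          filter_upwards [nhdsWithin_le_nhds hev, self_mem_nhdsWithin] with y hy1 (hy2 : -β ≤ y)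
          exact hgin y (abs_le.mpr ⟨hy2, hy1.le⟩)
        have hIic : HasDerivWithinAt g 0 (Iic (-β)) (-β) := by
          have h1 : HasDerivWithinAt (fun _ : ℝ => (-1:ℝ)) 0 (Iic (-β)) (-β) :=
            (hasDerivAt_const (-β) (-1:ℝ)).hasDerivWithinAt
          apply h1.congr_of_eventuallyEq ?_ hgnegβ
          filter_upwards [self_mem_nhdsWithin] with y (hy : y ≤ -β)
          rcases eq_or_lt_of_le hy with h'' | hy'
          · subst h''; exact hgnegβ
          · exact hgneg y hy'
        have := hIic.union hIci
        rwa [Iic_union_Ici, hasDerivWithinAt_univ] at this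
    · have hg20 : g2 x = 0 := by simp only [hg2def, if_neg (not_le.mpr h)]
      rw [hg20]
      rcases lt_abs.mp h with hx | hx
      · have hev : g =ᶠ[nhds x] fun _ => (1:ℝ) := by
          filter_upwards [eventually_gt_nhds hx] with y hy
          exact hgpos y hy
        exact (hasDerivAt_const x (1:ℝ)).congr_of_eventuallyEq hev
      · have hx' : x < -β := by linarith
        have hev : g =ᶠ[nhds x] fun _ => (-1:ℝ) := by
          filter_upwards [eventually_lt_nhds hx'] with y hy
          exact hgneg y hy
        exact (hasDerivAt_const x (-1:ℝ)).congr_of_eventuallyEq hev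
  have hderiv_g : deriv g = g2 := funext fun x => (hDg x).deriv
  have hdd : deriv (deriv u) = g2 := by rw [hderiv_u, hderiv_g]
  -- continuity of g2
  have hcont_f2 : Continuous f2 := by
    rw [hf2def]
    exact (continuous_const.mul (Real.continuous_cosh.comp
      (continuous_const.mul continuous_id))).add continuous_const
  have hcont_g2 : Continuous g2 := by
    simp only [hg2def]
    apply Continuous.if_le hcont_f2 continuous_const continuous_abs continuous_const
    intro x hx
    have hcc : Real.cosh (c*x) = Real.cosh (c*β) := by
      rw [← Real.cosh_abs (c*x), abs_mul, abs_of_pos hc0, hx]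
    have : f2 x = f2 β := by simp only [hf2def, hcc]
    rw [this, hf2β]
  -- C²
  have hdiff_u : Differentiable ℝ u := fun x => (hDu x).differentiableAt
  have hdiff_g : Differentiable ℝ g := fun x => (hDg x).differentiableAt
  have hC2 : ContDiff ℝ 2 u := by
    rw [show (2 : WithTop ℕ∞) = 1 + 1 from rfl, contDiff_succ_iff_deriv]
    refine ⟨hdiff_u, by simp, ?_⟩
    rw [hderiv_u, contDiff_one_iff_deriv, hderiv_g]
    exact ⟨hdiff_g, hcont_g2⟩
  -- ODE inside
  have hODE : ∀ x : ℝ, |x| ≤ β → (1/2) * deriv (deriv u) x - δ * u x + κ * x^2 + μ = 0 := by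
    intro x hx
    rw [hdd, hu' x, if_pos hx]
    simp only [hg2def, if_pos hx, hf2def, hfdef, hc2]
    field_simp
    ring
  -- inequality outside
  have hOUT : ∀ x : ℝ, β ≤ |x| → 0 ≤ (1/2) * deriv (deriv u) x - δ * u x + κ * x^2 + μ := by
    intro x hx
    rcases eq_or_lt_of_le hx with h' | h'
    · exact (hODE x (le_of_eq h'.symm)).ge
    · rw [hdd, hu' x, if_neg (not_le.mpr h')]
      simp only [hg2def, if_neg (not_le.mpr h')]
      rw [hfβ]
      have h1 : (0:ℝ) ≤ |x| - β := by linarith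
      have h2 : (0:ℝ) ≤ κ*(|x|+β) - δ := by
        nlinarith [mul_nonneg hκ.le (show (0:ℝ) ≤ |x| - β by linarith)]
      have h3 := mul_nonneg h1 h2
      have hsq : |x|^2 = x^2 := sq_abs x
      have h4 : δ * ((κ*β^2 + μ)/δ) = κ*β^2 + μ := by field_simp
      nlinarith [h3, hsq, h4]
  -- derivative bound
  have hbound : ∀ x : ℝ, |deriv u x| ≤ 1 := by
    intro x
    rw [hderiv_u]
    by_cases hx : |x| ≤ β
    · rw [hgin x hx]; exact hf1bound x hx
    · push_neg at hx
      rcases lt_abs.mp hx with h' | h'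
      · rw [hgpos x h']; norm_num
      · rw [hgneg x (by linarith)]; norm_num
  refine ⟨hC2, hbound, hODE, hOUT, ?_⟩
  intro x
  by_cases hx : |x| ≤ β
  · rw [hODE x hx]
    exact min_eq_left (by linarith [hbound x])
  · push_neg at hx
    have h1 := hOUT x hx.le
    have h2 : |deriv u x| = 1 := by
      rw [hderiv_u]
      rcases lt_abs.mp hx with h' | h'
      · rw [hgpos x h']; norm_num
      · rw [hgneg x (by linarith)]; norm_num
    rw [h2]
    simp only [sub_self]
    exact min_eq_right h1
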